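/- Let n ≥ 1, σ an involution of {1,…,n}, and v ∈ ℤⁿ an eigenvector of the permutation operator associated to σ with eigenvalue ±1, so that v_i ≡ v_{σ(i)} (mod 2) for all i. Let ℓ be an integer and B an n×n integer matrix with B_{ij} = B_{σ(i)σ(j)} for all i,j. Suppose B·v = λ·v with λ odd, and suppose that for all i, j with σ(i) = i and σ(j) = j one has B_{ij} ≡ 0 (mod 2). Then v_j ≡ 0 (mod 2) for every j with σ(j) = j. -/
import Mathlib


/-- Combinatorial core of the evenness theorem: if v is an eigenvector (eigenvalue ±1)
of the permutation operator of an involution σ, B satisfies B_{ij} = B_{σ(i)σ(j)} and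
B_{ij} is even whenever i, j are both fixed by σ, and Bᵀv = λv with λ odd, then
v_j is even for every fixed point j of σ. -/
theorem fixed_coordinates_even
    (n : ℕ) (hn : 1 ≤ n)
    (σ : Equiv.Perm (Fin n)) (hσ : ∀ k, σ (σ k) = k)
    (v : Fin n → ℤ) (ε : ℤ) (hε : ε = 1 ∨ ε = -1)
    (hveig : ∀ i, v i = ε * v (σ i))
    (B : Matrix (Fin n) (Fin n) ℤ)
    (hB : ∀ i j, B i j = B (σ i) (σ j))
    (lam : ℤ) (hlam : lam % 2 = 1)
    (hBv : ∀ j, lam * v j = ∑ i, B i j * v i)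
    (heven : ∀ i j, σ i = i → σ j = j → 2 ∣ B i j) :
    ∀ j, σ j = j → 2 ∣ v j := by
  intro j hj
  have hεcast : ((ε : ZMod 2)) = 1 := by rcases hε with h | h <;> simp [h] <;> decide
  have hv : ∀ i, ((v (σ i) : ZMod 2)) = (v i : ZMod 2) := by
    intro i
    have h1 : ((v i : ℤ) : ZMod 2) = ((ε * v (σ i) : ℤ) : ZMod 2) := by rw [← hveig i]
    rw [h1]; push_cast; rw [hεcast, one_mul]
  have key := congrArg (fun x : ℤ => (x : ZMod 2)) (hBv j)
  simp only [Int.cast_mul, Int.cast_sum] at key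
  have hsum : (∑ i, ((B i j : ℤ) : ZMod 2) * ((v i : ℤ) : ZMod 2)) = 0 := by
    apply Finset.sum_involution (fun i _ => σ i)
    · intro a _
      have hBa : ((B (σ a) j : ℤ) : ZMod 2) = (B a j : ZMod 2) := by
        have : B (σ a) j = B a j := by
          conv_rhs => rw [hB a j]
          rw [hj]
        rw [this]
      simp only [hBa, hv a]
      rw [← two_mul, show (2:ZMod 2)=0 from rfl, zero_mul]
    · intro a _ hfa heq
      apply hfa
      have hzero : ((B a j : ℤ) : ZMod 2) = 0 :=
        (ZMod.intCast_zmod_eq_zero_iff_dvd _ 2).mpr (heven a j heq hj)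
      rw [hzero, zero_mul]
    · intro a _; exact Finset.mem_univ _
    · intro a _; exact hσ a
  rw [hsum] at key
  have hlamcast : ((lam : ZMod 2)) = 1 := by
    have h2 : lam = 2 * (lam / 2) + 1 := by omega
    rw [h2]; push_cast; rw [show (2:ZMod 2)=0 from rfl, zero_mul, zero_add]
  rw [hlamcast, one_mul] at key
  exact (ZMod.intCast_zmod_eq_zero_iff_dvd _ 2).mp key
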